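/- For Re ν > -1, Re β > 0 and α > 0, ∫_0^∞ e^{-β t} t^{2ν+1} · ₀F₃(3/2, ν+1, ν+3/2; -α t²) dt = (Γ(2ν+2)/(4√α)) · β^{-(2ν+1)} · sin(4√α/β). -/

import Mathlib

open MeasureTheory Real

/-- Pochhammer symbol for real arguments. -/
noncomputable def poch (b : ℝ) (k : ℕ) : ℝ := ∏ i ∈ Finset.range k, (b + i)

/-- The generalized hypergeometric series `₀F₃`. -/
noncomputable def hyp0F3 (b₁ b₂ b₃ x : ℝ) : ℝ :=
  ∑' k : ℕ, x ^ k / (poch b₁ k * poch b₂ k * poch b₃ k * k.factorial)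

/-- The denominator of the `₀F₃` series in our case. -/
noncomputable def Dν (ν : ℝ) (k : ℕ) : ℝ :=
  poch (3/2) k * poch (ν + 1) k * poch (ν + 3/2) k * (k.factorial : ℝ)

lemma hyp0F3_eq (ν x : ℝ) :
    hyp0F3 (3/2) (ν + 1) (ν + 3/2) x = ∑' k : ℕ, x ^ k / Dν ν k := rfl

lemma poch_succ (b : ℝ) (k : ℕ) : poch b (k + 1) = poch b k * (b + k) :=
  Finset.prod_range_succ _ _

lemma poch_pos {b : ℝ} (hb : 0 < b) (k : ℕ) : 0 < poch b k :=
  Finset.prod_pos fun i _ => by positivity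

lemma Dν_pos {ν : ℝ} (hν : ν > -1) (k : ℕ) : 0 < Dν ν k := by
  have h1 : (0:ℝ) < ν + 1 := by linarith
  have h2 : (0:ℝ) < ν + 3/2 := by linarith
  have h3 : (0:ℝ) < (3:ℝ)/2 := by norm_num
  have := poch_pos h1 k
  have := poch_pos h2 k
  have := poch_pos h3 k
  have : (0:ℝ) < (k.factorial : ℝ) := by positivity
  unfold Dν; positivity

lemma Dν_succ (ν : ℝ) (k : ℕ) :
    Dν ν (k + 1) = Dν ν k * ((3/2 + k) * ((ν + 1 + k) * ((ν + 3/2 + k) * (k + 1)))) := by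
  simp only [Dν, poch_succ, Nat.factorial_succ]
  push_cast
  ring

lemma coeff (ν : ℝ) (hν : ν > -1) (k : ℕ) :
    Real.Gamma (2*ν + 2 + 2*(k:ℝ)) * ((2*k + 1).factorial : ℝ) =
      Real.Gamma (2*ν + 2) * 16 ^ k * Dν ν k := by
  induction k with
  | zero => simp [Dν, poch]
  | succ k ih =>
    have hk : (0:ℝ) ≤ (k:ℝ) := Nat.cast_nonneg k
    have h0 : (0:ℝ) < 2*ν + 2 + 2*(k:ℝ) := by linarith
    have e1 : (2*ν + 2 + 2*((k+1:ℕ):ℝ)) = (2*ν + 2 + 2*(k:ℝ) + 1) + 1 := by push_cast; ring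
    have e2 : (2*ν + 2 + 2*(k:ℝ) + 1) = (2*ν + 2 + 2*(k:ℝ)) + 1 := by ring
    have e3 : 2*(k+1) + 1 = ((2*k + 1) + 1) + 1 := by ring
    rw [e1, Real.Gamma_add_one (by linarith), e2, Real.Gamma_add_one (by linarith),
      e3, Nat.factorial_succ, Nat.factorial_succ, Dν_succ]
    push_cast
    linear_combination ((2*ν + 2 + 2*(k:ℝ) + 1) * (2*ν + 2 + 2*(k:ℝ)) *
      (2*(k:ℝ) + 1 + 1 + 1) * (2*(k:ℝ) + 1 + 1)) * ih

lemma point_eq (ν β c d : ℝ) (k : ℕ) {t : ℝ} (ht : 0 < t) :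
    (Real.exp (-β*t) * t ^ (2*ν + 1)) * ((c * t^2) ^ k / d) =
      (c ^ k / d) * (t ^ (2*ν + 2 + 2*(k:ℝ) - 1) * Real.exp (-(β*t))) := by
  have h1 : t ^ (2*ν + 2 + 2*(k:ℝ) - 1) = t ^ (2*ν + 1) * t ^ (2*k) := by
    rw [← Real.rpow_natCast t (2*k), ← Real.rpow_add ht]
    congr 1; push_cast; ring
  rw [h1, neg_mul]
  ring

lemma integrable_aux {s b : ℝ} (hs : -1 < s) (hb : 0 < b) :
    IntegrableOn (fun t : ℝ => t ^ s * Real.exp (-b * t)) (Set.Ioi 0) := by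
  have h := integrableOn_rpow_mul_exp_neg_mul_rpow hs (by norm_num : (0:ℝ) < 1) hb
  refine h.congr_fun (fun t ht => ?_) measurableSet_Ioi
  simp only [Real.rpow_one]

theorem laplace_hyp0F3 (ν α β : ℝ) (hν : ν > -1) (hβ : 0 < β) (hα : 0 < α) :
    (∫ t in Set.Ioi (0 : ℝ),
        Real.exp (-β * t) * t ^ (2 * ν + 1) * hyp0F3 (3/2) (ν + 1) (ν + 3/2) (-α * t ^ 2)) =
      (Real.Gamma (2 * ν + 2) / (4 * Real.sqrt α)) * β ^ (-(2 * ν + 1)) *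
        Real.sin (4 * Real.sqrt α / β) := by
  have hb : (0:ℝ) < 1/β := by positivity
  set F : ℕ → ℝ → ℝ :=
    fun k t => (Real.exp (-β*t) * t ^ (2*ν + 1)) * ((-α * t^2) ^ k / Dν ν k) with hF
  have hpos : ∀ k : ℕ, (0:ℝ) < 2*ν + 2 + 2*(k:ℝ) := by
    intro k; have : (0:ℝ) ≤ (k:ℝ) := Nat.cast_nonneg k; linarith
  -- integrability of each term
  have hFint : ∀ k : ℕ, IntegrableOn (F k) (Set.Ioi 0) := by
    intro k
    have base : IntegrableOn
        (fun t : ℝ => t ^ (2*ν + 2 + 2*(k:ℝ) - 1) * Real.exp (-(β*t))) (Set.Ioi 0) := by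
      have := integrable_aux (s := 2*ν + 2 + 2*(k:ℝ) - 1) (by linarith [hpos k]) hβ
      refine this.congr_fun (fun t ht => ?_) measurableSet_Ioi
      simp only [neg_mul]
    have base2 : IntegrableOn
        (fun t : ℝ => ((-α) ^ k / Dν ν k) * (t ^ (2*ν + 2 + 2*(k:ℝ) - 1) * Real.exp (-(β*t))))
        (Set.Ioi 0) := base.const_mul _
    exact base2.congr_fun (fun t ht => (point_eq ν β (-α) (Dν ν k) k ht).symm) measurableSet_Ioi
  -- value of each term integral
  have key : ∀ k : ℕ, (∫ t in Set.Ioi (0:ℝ), F k t) =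
      ((-α) ^ k / Dν ν k) * ((1/β) ^ (2*ν + 2 + 2*(k:ℝ)) * Real.Gamma (2*ν + 2 + 2*(k:ℝ))) := by
    intro k
    rw [setIntegral_congr_fun measurableSet_Ioi
      (fun t (ht : t ∈ Set.Ioi (0:ℝ)) => point_eq ν β (-α) (Dν ν k) k ht),
      integral_const_mul, integral_rpow_mul_exp_neg_mul_Ioi (hpos k) hβ]
  -- value of each norm integral
  have nkey : ∀ k : ℕ, (∫ t in Set.Ioi (0:ℝ), ‖F k t‖) =
      (α ^ k / Dν ν k) * ((1/β) ^ (2*ν + 2 + 2*(k:ℝ)) * Real.Gamma (2*ν + 2 + 2*(k:ℝ))) := by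
    intro k
    rw [setIntegral_congr_fun measurableSet_Ioi
      (fun t (ht : t ∈ Set.Ioi (0:ℝ)) => ?_),
      integral_const_mul, integral_rpow_mul_exp_neg_mul_Ioi (hpos k) hβ]
    have ht' : (0:ℝ) < t := ht
    have h1 : ‖F k t‖ = (Real.exp (-β*t) * t ^ (2*ν + 1)) * ((α * t^2) ^ k / Dν ν k) := by
      rw [hF]
      have habs : |(-α * t^2)| = α * t^2 := by
        rw [abs_of_nonpos (by nlinarith : -α * t^2 ≤ 0)]; ring
      rw [Real.norm_eq_abs, abs_mul, abs_mul, abs_div, abs_pow, habs,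
        abs_of_pos (Real.exp_pos _), abs_of_pos (Real.rpow_pos_of_pos ht' _),
        abs_of_pos (Dν_pos hν k)]
    rw [h1]
    exact point_eq ν β α (Dν ν k) k ht'
  -- summability of norm integrals
  have hGsum : Summable (fun k : ℕ =>
      (α ^ k / Dν ν k) * ((1/β) ^ (2*ν + 2 + 2*(k:ℝ)) * Real.Gamma (2*ν + 2 + 2*(k:ℝ)))) := by
    obtain ⟨P, hP⟩ : ∃ P : ℝ, P = (1/β) ^ (2:ℕ) := ⟨_, rfl⟩
    have hP0 : 0 < P := by rw [hP]; positivity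
    have hGeq : ∀ k : ℕ,
        (α ^ k / Dν ν k) * ((1/β) ^ (2*ν + 2 + 2*(k:ℝ)) * Real.Gamma (2*ν + 2 + 2*(k:ℝ))) =
        (Real.Gamma (2*ν + 2) * (1/β) ^ (2*ν + 2)) *
          ((16 * α * P) ^ k / ((2*k + 1).factorial : ℝ)) := by
      intro k
      have hc := coeff ν hν k
      have hD := (Dν_pos hν k).ne'
      have hfac : (((2*k + 1).factorial : ℕ) : ℝ) ≠ 0 :=
        Nat.cast_ne_zero.mpr (Nat.factorial_ne_zero _)
      have hsplit : (1/β) ^ (2*ν + 2 + 2*(k:ℝ)) = (1/β) ^ (2*ν + 2) * P ^ k := by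
        rw [hP, ← pow_mul, ← Real.rpow_natCast (1/β) (2*k), ← Real.rpow_add hb]
        congr 1; push_cast; ring
      have hGam : Real.Gamma (2*ν + 2 + 2*(k:ℝ)) =
          Real.Gamma (2*ν + 2) * 16 ^ k * Dν ν k / ((2*k + 1).factorial : ℝ) := by
        rw [eq_div_iff hfac]
        linear_combination hc
      rw [hsplit, hGam]
      field_simp
      ring
    rw [summable_congr hGeq]
    apply Summable.mul_left
    have hsum : Summable (fun k : ℕ => (16 * α * P) ^ k / (k.factorial : ℝ)) :=
      Real.summable_pow_div_factorial _
    have hle : ∀ k : ℕ, (16 * α * P) ^ k / ((2*k + 1).factorial : ℝ) ≤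
        (16 * α * P) ^ k / (k.factorial : ℝ) := by
      intro k
      exact div_le_div_of_nonneg_left (by positivity) (by positivity)
        (by exact_mod_cast Nat.factorial_le (by omega))
    exact Summable.of_nonneg_of_le (fun k => by positivity) hle hsum
  have hFsum : Summable (fun k : ℕ => ∫ t in Set.Ioi (0:ℝ), ‖F k t‖) := by
    rw [summable_congr nkey]; exact hGsum
  -- per-term closed form matching the sine series
  have hterm : ∀ k : ℕ,
      ((-α) ^ k / Dν ν k) * ((1/β) ^ (2*ν + 2 + 2*(k:ℝ)) * Real.Gamma (2*ν + 2 + 2*(k:ℝ))) =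
      (Real.Gamma (2*ν + 2) / (4 * Real.sqrt α) * β ^ (-(2*ν + 1))) *
        ((-1) ^ k * (4 * Real.sqrt α / β) ^ (2*k + 1) / ((2*k + 1).factorial : ℝ)) := by
    intro k
    have hc := coeff ν hν k
    have hs : 0 < Real.sqrt α := Real.sqrt_pos.mpr hα
    have hs2 : Real.sqrt α ^ 2 = α := Real.sq_sqrt hα.le
    have hβ' : β ^ (-(2*ν + 1)) = (1/β) ^ (2*ν + 1) := by
      rw [one_div, Real.inv_rpow hβ.le, Real.rpow_neg hβ.le]
    have hsplit : (1/β) ^ (2*ν + 2 + 2*(k:ℝ)) = (1/β) ^ (2*ν + 1) * (1/β) ^ (2*k + 1) := by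
      rw [← Real.rpow_natCast (1/β) (2*k + 1), ← Real.rpow_add hb]
      congr 1; push_cast; ring
    have hx : (4 * Real.sqrt α / β) ^ (2*k + 1) =
        (4 * Real.sqrt α) ^ (2*k + 1) * (1/β) ^ (2*k + 1) := by
      rw [div_eq_mul_one_div, mul_pow]
    have hy : (4 * Real.sqrt α) ^ (2*k + 1) = 4 * 16 ^ k * α ^ k * Real.sqrt α := by
      rw [pow_succ, pow_mul,
        show (4 * Real.sqrt α) ^ 2 = 16 * α by rw [mul_pow, hs2]; norm_num,
        mul_pow]
      ring
    have hD := (Dν_pos hν k).ne'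
    have hfac : (((2*k + 1).factorial : ℕ) : ℝ) ≠ 0 :=
      Nat.cast_ne_zero.mpr (Nat.factorial_ne_zero _)
    have hGam : Real.Gamma (2*ν + 2 + 2*(k:ℝ)) =
        Real.Gamma (2*ν + 2) * 16 ^ k * Dν ν k / ((2*k + 1).factorial : ℝ) := by
      rw [eq_div_iff hfac]
      linear_combination hc
    rw [hβ', hsplit, hx, hy, hGam]
    field_simp
    ring
  -- assemble
  calc (∫ t in Set.Ioi (0 : ℝ),
        Real.exp (-β * t) * t ^ (2 * ν + 1) * hyp0F3 (3/2) (ν + 1) (ν + 3/2) (-α * t ^ 2))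
      = ∫ t in Set.Ioi (0:ℝ), ∑' k : ℕ, F k t := by
        refine integral_congr_ae (Filter.Eventually.of_forall fun t => ?_)
        simp only [hyp0F3_eq, hF]
        exact (tsum_mul_left).symm
    _ = ∑' k : ℕ, ∫ t in Set.Ioi (0:ℝ), F k t :=
        (integral_tsum_of_summable_integral_norm hFint hFsum).symm
    _ = ∑' k : ℕ, ((-α) ^ k / Dν ν k) *
          ((1/β) ^ (2*ν + 2 + 2*(k:ℝ)) * Real.Gamma (2*ν + 2 + 2*(k:ℝ))) := tsum_congr key
    _ = ∑' k : ℕ, (Real.Gamma (2*ν + 2) / (4 * Real.sqrt α) * β ^ (-(2*ν + 1))) *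
          ((-1) ^ k * (4 * Real.sqrt α / β) ^ (2*k + 1) / ((2*k + 1).factorial : ℝ)) :=
        tsum_congr hterm
    _ = (Real.Gamma (2 * ν + 2) / (4 * Real.sqrt α)) * β ^ (-(2 * ν + 1)) *
        Real.sin (4 * Real.sqrt α / β) := by
        rw [tsum_mul_left, ← Real.sin_eq_tsum]
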